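/- Let 𝒴 ⊂ ℝ be a finite set, let 𝒜, 𝒢₁, ℬ₁, 𝒢₂ be finite types, let p be a strictly positive probability mass function on 𝒴 × 𝒜 × 𝒢₁ × ℬ₁ × 𝒢₂, and fix a ∈ 𝒜. If Y ⊥ B₁ | (A, G₁, G₂) under p, then for all (y, a′, g₁, g₂): ∑_{b₁} p(b₁ | Y=y, A=a′, G₁=g₁, G₂=g₂) · ψ_a^{(G₁,B₁),G₂}(y,a′,g₁,b₁,g₂) = ψ_a^{G₁,G₂}(y,a′,g₁,g₂); that is, the conditional expectation of the influence function for the adjustment set ((G₁,B₁),G₂) given (Y,A,G₁,G₂) equals the influence function for the adjustment set (G₁,G₂). -/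

import Mathlib

open Finset

noncomputable section

variable {Y : Finset ℝ} {A G₁ B₁ G₂ : Type}
variable [Fintype A] [Fintype G₁] [Fintype B₁] [Fintype G₂] [DecidableEq A]

/-- Marginal `p(g₁)`. -/
def pG1 (p : Y × A × G₁ × B₁ × G₂ → ℝ) (g₁ : G₁) : ℝ :=
  ∑ y : Y, ∑ a : A, ∑ b₁ : B₁, ∑ g₂ : G₂, p (y, a, g₁, b₁, g₂)

/-- Marginal `p(b₁)`. -/
def pB1 (p : Y × A × G₁ × B₁ × G₂ → ℝ) (b₁ : B₁) : ℝ :=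
  ∑ y : Y, ∑ a : A, ∑ g₁ : G₁, ∑ g₂ : G₂, p (y, a, g₁, b₁, g₂)

/-- Marginal `p(g₂)`. -/
def pG2 (p : Y × A × G₁ × B₁ × G₂ → ℝ) (g₂ : G₂) : ℝ :=
  ∑ y : Y, ∑ a : A, ∑ g₁ : G₁, ∑ b₁ : B₁, p (y, a, g₁, b₁, g₂)

/-- Marginal `p(g₁, b₁)`. -/
def pG1B1 (p : Y × A × G₁ × B₁ × G₂ → ℝ) (g₁ : G₁) (b₁ : B₁) : ℝ :=
  ∑ y : Y, ∑ a : A, ∑ g₂ : G₂, p (y, a, g₁, b₁, g₂)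

/-- Marginal `p(a, b₁, g₂)`. -/
def pAB1G2 (p : Y × A × G₁ × B₁ × G₂ → ℝ) (a : A) (b₁ : B₁) (g₂ : G₂) : ℝ :=
  ∑ y : Y, ∑ g₁ : G₁, p (y, a, g₁, b₁, g₂)

/-- Marginal `p(a, g₁, b₁, g₂)`. -/
def pAG1B1G2 (p : Y × A × G₁ × B₁ × G₂ → ℝ) (a : A) (g₁ : G₁) (b₁ : B₁) (g₂ : G₂) : ℝ :=
  ∑ y : Y, p (y, a, g₁, b₁, g₂)

/-- Marginal `p(a, g₁, g₂)`. -/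
def pAG1G2 (p : Y × A × G₁ × B₁ × G₂ → ℝ) (a : A) (g₁ : G₁) (g₂ : G₂) : ℝ :=
  ∑ y : Y, ∑ b₁ : B₁, p (y, a, g₁, b₁, g₂)

/-- Outcome regression `m_B(b₁,g₂) = ∑_y y·p(y | a, b₁, g₂)` for the
adjustment set `(B₁, G₂)`. -/
def mB (p : Y × A × G₁ × B₁ × G₂ → ℝ) (a : A) (b₁ : B₁) (g₂ : G₂) : ℝ :=
  ∑ y : Y, (y : ℝ) * ((∑ g₁ : G₁, p (y, a, g₁, b₁, g₂)) / pAB1G2 p a b₁ g₂)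

/-- Outcome regression `m_{GB}(g₁,b₁,g₂) = ∑_y y·p(y | a, g₁, b₁, g₂)` for
the adjustment set `((G₁, B₁), G₂)`. -/
def mGB (p : Y × A × G₁ × B₁ × G₂ → ℝ) (a : A) (g₁ : G₁) (b₁ : B₁) (g₂ : G₂) : ℝ :=
  ∑ y : Y, (y : ℝ) * (p (y, a, g₁, b₁, g₂) / pAG1B1G2 p a g₁ b₁ g₂)

/-- Outcome regression `m_{GG}(g₁,g₂) = ∑_y y·p(y | a, g₁, g₂)` for the
adjustment set `(G₁, G₂)`. -/
def mGG (p : Y × A × G₁ × B₁ × G₂ → ℝ) (a : A) (g₁ : G₁) (g₂ : G₂) : ℝ :=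
  ∑ y : Y, (y : ℝ) * ((∑ b₁ : B₁, p (y, a, g₁, b₁, g₂)) / pAG1G2 p a g₁ g₂)

/-- Target parameter for the adjustment set `(B₁, G₂)`. -/
def TB (p : Y × A × G₁ × B₁ × G₂ → ℝ) (a : A) : ℝ :=
  ∑ b₁ : B₁, pB1 p b₁ * ∑ g₂ : G₂, pG2 p g₂ * mB p a b₁ g₂

/-- Target parameter for the adjustment set `((G₁, B₁), G₂)`. -/
def TGB (p : Y × A × G₁ × B₁ × G₂ → ℝ) (a : A) : ℝ :=
  ∑ g₁ : G₁, ∑ b₁ : B₁, pG1B1 p g₁ b₁ * ∑ g₂ : G₂, pG2 p g₂ * mGB p a g₁ b₁ g₂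

/-- Target parameter for the adjustment set `(G₁, G₂)`. -/
def TGG (p : Y × A × G₁ × B₁ × G₂ → ℝ) (a : A) : ℝ :=
  ∑ g₁ : G₁, pG1 p g₁ * ∑ g₂ : G₂, pG2 p g₂ * mGG p a g₁ g₂

/-- Influence function `ψ_a^{B₁,G₂}` for the adjustment set `(B₁, G₂)`. -/
def psiB (p : Y × A × G₁ × B₁ × G₂ → ℝ) (a : A)
    (y : Y) (a' : A) (b₁ : B₁) (g₂ : G₂) : ℝ :=
  (if a' = a then (1 : ℝ) else 0) * (pB1 p b₁ * pG2 p g₂ / pAB1G2 p a b₁ g₂) *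
      ((y : ℝ) - mB p a b₁ g₂)
    + (∑ g₂' : G₂, pG2 p g₂' * mB p a b₁ g₂')
    + (∑ b₁' : B₁, pB1 p b₁' * mB p a b₁' g₂)
    - 2 * TB p a

/-- Influence function `ψ_a^{(G₁,B₁),G₂}` for the adjustment set `((G₁, B₁), G₂)`. -/
def psiGB (p : Y × A × G₁ × B₁ × G₂ → ℝ) (a : A)
    (y : Y) (a' : A) (g₁ : G₁) (b₁ : B₁) (g₂ : G₂) : ℝ :=
  (if a' = a then (1 : ℝ) else 0) *
      (pG1B1 p g₁ b₁ * pG2 p g₂ / pAG1B1G2 p a g₁ b₁ g₂) *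
      ((y : ℝ) - mGB p a g₁ b₁ g₂)
    + (∑ g₂' : G₂, pG2 p g₂' * mGB p a g₁ b₁ g₂')
    + (∑ g₁' : G₁, ∑ b₁' : B₁, pG1B1 p g₁' b₁' * mGB p a g₁' b₁' g₂)
    - 2 * TGB p a

/-- Influence function `ψ_a^{G₁,G₂}` for the adjustment set `(G₁, G₂)`. -/
def psiGG (p : Y × A × G₁ × B₁ × G₂ → ℝ) (a : A)
    (y : Y) (a' : A) (g₁ : G₁) (g₂ : G₂) : ℝ :=
  (if a' = a then (1 : ℝ) else 0) * (pG1 p g₁ * pG2 p g₂ / pAG1G2 p a g₁ g₂) *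
      ((y : ℝ) - mGG p a g₁ g₂)
    + (∑ g₂' : G₂, pG2 p g₂' * mGG p a g₁ g₂')
    + (∑ g₁' : G₁, pG1 p g₁' * mGG p a g₁' g₂)
    - 2 * TGG p a

/-- Conditional independence `G₁ ⊥ (A, G₂) | B₁` under `p`. -/
def CI_G1_AG2_B1 (p : Y × A × G₁ × B₁ × G₂ → ℝ) : Prop :=
  ∀ (g₁ : G₁) (a : A) (g₂ : G₂) (b₁ : B₁),
    (∑ y : Y, p (y, a, g₁, b₁, g₂)) / pB1 p b₁ =
      (pG1B1 p g₁ b₁ / pB1 p b₁) * (pAB1G2 p a b₁ g₂ / pB1 p b₁)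

/-- Conditional independence `Y ⊥ B₁ | (A, G₁, G₂)` under `p`. -/
def CI_Y_B1_AG1G2 (p : Y × A × G₁ × B₁ × G₂ → ℝ) : Prop :=
  ∀ (y : Y) (a : A) (g₁ : G₁) (b₁ : B₁) (g₂ : G₂),
    p (y, a, g₁, b₁, g₂) / pAG1G2 p a g₁ g₂ =
      ((∑ b₁' : B₁, p (y, a, g₁, b₁', g₂)) / pAG1G2 p a g₁ g₂) *
        (pAG1B1G2 p a g₁ b₁ g₂ / pAG1G2 p a g₁ g₂)

/-- Variance of a real function of the observation under `p`. -/
def VarP (p : Y × A × G₁ × B₁ × G₂ → ℝ) (f : Y × A × G₁ × B₁ × G₂ → ℝ) : ℝ :=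
  (∑ o : Y × A × G₁ × B₁ × G₂, p o * f o ^ 2) -
    (∑ o : Y × A × G₁ × B₁ × G₂, p o * f o) ^ 2

lemma aux_pAG1B1G2_pos (p : Y × A × G₁ × B₁ × G₂ → ℝ) (hpos : ∀ o, 0 < p o)
    [Nonempty Y] (a : A) (g₁ : G₁) (b₁ : B₁) (g₂ : G₂) :
    0 < pAG1B1G2 p a g₁ b₁ g₂ :=
  Finset.sum_pos (fun _ _ => hpos _) Finset.univ_nonempty

lemma aux_pAG1G2_pos (p : Y × A × G₁ × B₁ × G₂ → ℝ) (hpos : ∀ o, 0 < p o)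
    [Nonempty Y] [Nonempty B₁] (a : A) (g₁ : G₁) (g₂ : G₂) :
    0 < pAG1G2 p a g₁ g₂ :=
  Finset.sum_pos (fun _ _ => Finset.sum_pos (fun _ _ => hpos _)
    Finset.univ_nonempty) Finset.univ_nonempty

lemma aux_sum_pG1B1 (p : Y × A × G₁ × B₁ × G₂ → ℝ) (g₁ : G₁) :
    ∑ b₁ : B₁, pG1B1 p g₁ b₁ = pG1 p g₁ := by
  unfold pG1 pG1B1
  rw [Finset.sum_comm]
  refine Finset.sum_congr rfl fun y _ => ?_
  rw [Finset.sum_comm]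

lemma aux_mGB_eq_mGG (p : Y × A × G₁ × B₁ × G₂ → ℝ) (hpos : ∀ o, 0 < p o)
    [Nonempty Y] [Nonempty B₁] (hCI : CI_Y_B1_AG1G2 p)
    (a : A) (g₁ : G₁) (b₁ : B₁) (g₂ : G₂) :
    mGB p a g₁ b₁ g₂ = mGG p a g₁ g₂ := by
  have hD := (aux_pAG1G2_pos p hpos a g₁ g₂).ne'
  have hQ := (aux_pAG1B1G2_pos p hpos a g₁ b₁ g₂).ne'
  unfold mGB mGG
  refine Finset.sum_congr rfl fun y _ => ?_
  have h := hCI y a g₁ b₁ g₂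
  field_simp at h
  congr 1
  rw [div_eq_div_iff hQ hD]
  apply mul_right_cancel₀ hD
  linear_combination (pAG1G2 p a g₁ g₂) * h

lemma aux_TGB_eq_TGG (p : Y × A × G₁ × B₁ × G₂ → ℝ) (hpos : ∀ o, 0 < p o)
    [Nonempty Y] [Nonempty B₁] (hCI : CI_Y_B1_AG1G2 p) (a : A) :
    TGB p a = TGG p a := by
  unfold TGB TGG
  refine Finset.sum_congr rfl fun g₁ _ => ?_
  rw [← aux_sum_pG1B1 p g₁, Finset.sum_mul]
  refine Finset.sum_congr rfl fun b₁ _ => ?_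
  congr 1
  exact Finset.sum_congr rfl fun g₂' _ => by
    rw [aux_mGB_eq_mGG p hpos hCI]

/-- Projection identity in the proof of Lemma 4.4 (deletion of
overadjustment mediator variables): under `Y ⊥ B₁ | (A, G₁, G₂)`, the
conditional expectation of `ψ_a^{(G₁,B₁),G₂}` given `(Y, A, G₁, G₂)`
equals `ψ_a^{G₁,G₂}`. -/
theorem psi_projection_mediator
    (p : Y × A × G₁ × B₁ × G₂ → ℝ)
    (hpos : ∀ o, 0 < p o) (hsum : ∑ o, p o = 1) (a : A)
    (hCI : CI_Y_B1_AG1G2 p) :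
    ∀ (y : Y) (a' : A) (g₁ : G₁) (g₂ : G₂),
      ∑ b₁ : B₁,
        (p (y, a', g₁, b₁, g₂) / (∑ b₁' : B₁, p (y, a', g₁, b₁', g₂))) *
          psiGB p a y a' g₁ b₁ g₂ =
        psiGG p a y a' g₁ g₂ := by
  have hne : Nonempty (Y × A × G₁ × B₁ × G₂) := by
    by_contra h
    rw [not_nonempty_iff] at h
    rw [Finset.univ_eq_empty, Finset.sum_empty] at hsum
    norm_num at hsum
  obtain ⟨⟨y0, a0, g0, b0, h0⟩⟩ := hne
  haveI : Nonempty Y := ⟨y0⟩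
  haveI : Nonempty B₁ := ⟨b0⟩
  intro y a' g₁ g₂
  have hD := (aux_pAG1G2_pos p hpos a g₁ g₂).ne'
  have hS : (0:ℝ) < ∑ b₁' : B₁, p (y, a', g₁, b₁', g₂) :=
    Finset.sum_pos (fun _ _ => hpos _) Finset.univ_nonempty
  have hpsiGB : ∀ b₁ : B₁, psiGB p a y a' g₁ b₁ g₂ =
      (if a' = a then (1:ℝ) else 0) *
        (pG1B1 p g₁ b₁ * pG2 p g₂ / pAG1B1G2 p a g₁ b₁ g₂) *
        ((y : ℝ) - mGG p a g₁ g₂)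
      + ((∑ g₂' : G₂, pG2 p g₂' * mGG p a g₁ g₂')
        + (∑ g₁' : G₁, pG1 p g₁' * mGG p a g₁' g₂)
        - 2 * TGG p a) := by
    intro b₁
    unfold psiGB
    rw [aux_TGB_eq_TGG p hpos hCI a]
    simp only [aux_mGB_eq_mGG p hpos hCI]
    have h1 : ∑ g₁' : G₁, ∑ b₁' : B₁, pG1B1 p g₁' b₁' * mGG p a g₁' g₂
        = ∑ g₁' : G₁, pG1 p g₁' * mGG p a g₁' g₂ := by
      refine Finset.sum_congr rfl fun g₁' _ => ?_
      rw [← Finset.sum_mul, aux_sum_pG1B1]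
    rw [h1]; ring
  simp only [hpsiGB, mul_add, Finset.sum_add_distrib]
  have hq : ∑ b₁ : B₁,
      p (y, a', g₁, b₁, g₂) / (∑ b₁' : B₁, p (y, a', g₁, b₁', g₂)) = 1 := by
    rw [← Finset.sum_div, div_self hS.ne']
  have hsecond : ∑ b₁ : B₁,
      p (y, a', g₁, b₁, g₂) / (∑ b₁' : B₁, p (y, a', g₁, b₁', g₂)) *
        ((∑ g₂' : G₂, pG2 p g₂' * mGG p a g₁ g₂')
          + (∑ g₁' : G₁, pG1 p g₁' * mGG p a g₁' g₂)
          - 2 * TGG p a)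
      = (∑ g₂' : G₂, pG2 p g₂' * mGG p a g₁ g₂')
          + (∑ g₁' : G₁, pG1 p g₁' * mGG p a g₁' g₂)
          - 2 * TGG p a := by
    rw [← Finset.sum_mul, hq, one_mul]
  rw [hsecond]
  have hfirst : ∑ b₁ : B₁,
      p (y, a', g₁, b₁, g₂) / (∑ b₁' : B₁, p (y, a', g₁, b₁', g₂)) *
        ((if a' = a then (1:ℝ) else 0) *
          (pG1B1 p g₁ b₁ * pG2 p g₂ / pAG1B1G2 p a g₁ b₁ g₂) *
          ((y : ℝ) - mGG p a g₁ g₂))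
      = (if a' = a then (1:ℝ) else 0) *
          (pG1 p g₁ * pG2 p g₂ / pAG1G2 p a g₁ g₂) *
          ((y : ℝ) - mGG p a g₁ g₂) := by
    by_cases ha : a' = a
    · subst ha
      simp only [eq_self_iff_true, if_true, one_mul]
      have key : ∀ b₁ : B₁,
          p (y, a', g₁, b₁, g₂) / (∑ b₁' : B₁, p (y, a', g₁, b₁', g₂)) *
            (pG1B1 p g₁ b₁ * pG2 p g₂ / pAG1B1G2 p a' g₁ b₁ g₂)
          = pG1B1 p g₁ b₁ * pG2 p g₂ / pAG1G2 p a' g₁ g₂ := by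
        intro b₁
        have hQ := (aux_pAG1B1G2_pos p hpos a' g₁ b₁ g₂).ne'
        have h := hCI y a' g₁ b₁ g₂
        field_simp at h
        have hp : p (y, a', g₁, b₁, g₂) =
            (∑ b₁' : B₁, p (y, a', g₁, b₁', g₂)) * pAG1B1G2 p a' g₁ b₁ g₂ /
              pAG1G2 p a' g₁ g₂ := by
          rw [eq_div_iff hD]
          apply mul_right_cancel₀ hD
          linear_combination (pAG1G2 p a' g₁ g₂) * h
        rw [hp]
        field_simp
      calc ∑ b₁ : B₁,
            p (y, a', g₁, b₁, g₂) / (∑ b₁' : B₁, p (y, a', g₁, b₁', g₂)) *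
              (pG1B1 p g₁ b₁ * pG2 p g₂ / pAG1B1G2 p a' g₁ b₁ g₂ *
                ((y : ℝ) - mGG p a' g₁ g₂))
          = ∑ b₁ : B₁, (pG1B1 p g₁ b₁ * pG2 p g₂ / pAG1G2 p a' g₁ g₂) *
              ((y : ℝ) - mGG p a' g₁ g₂) := by
            refine Finset.sum_congr rfl fun b₁ _ => ?_
            rw [← mul_assoc, key b₁]
        _ = (∑ b₁ : B₁, pG1B1 p g₁ b₁) * pG2 p g₂ / pAG1G2 p a' g₁ g₂ *
              ((y : ℝ) - mGG p a' g₁ g₂) := by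
            rw [← Finset.sum_mul, ← Finset.sum_div, ← Finset.sum_mul]
        _ = pG1 p g₁ * pG2 p g₂ / pAG1G2 p a' g₁ g₂ *
              ((y : ℝ) - mGG p a' g₁ g₂) := by rw [aux_sum_pG1B1]
    · simp [ha]
  rw [hfirst]
  unfold psiGG
  ring

end
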